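/- Let U be a Lipschitz subdomain of the unit disc D. Then U is degenerate in D: for every sequence {f_j} of holomorphic self-maps of D with f_j(D) ⊆ U, every limit of the iterated function system {f_j ∘ ⋯ ∘ f_1} in the compact-open topology is constant. -/

import Mathlib

open Metric Set Filter
open scoped ENNReal NNReal

noncomputable section

/-- The open unit disc in `ℂ`. -/
def uDisc : Set ℂ := Metric.ball 0 1

/-- The inverse hyperbolic tangent. -/
def artanh (x : ℝ) : ℝ := Real.log ((1 + x) / (1 - x)) / 2

/-- The Poincaré (hyperbolic) distance on the unit disc. -/
def pDist (ζ η : ℂ) : ℝ :=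
  artanh ‖(ζ - η) / (1 - (starRingEnd ℂ) ζ * η)‖

/-- Hyperbolic ball in the unit disc. -/
def hBall (z : ℂ) (r : ℝ) : Set ℂ := {w ∈ uDisc | pDist w z < r}

/-- Bloch radius of a subset of the unit disc. -/
def blochRadiusD (U : Set ℂ) : ℝ≥0∞ :=
  ⨆ (r : NNReal) (_ : ∃ z ∈ uDisc, hBall z (r : ℝ) ⊆ U), (r : ℝ≥0∞)

/-- `tanh` extended to `ℝ≥0∞`, with `tanh ∞ = 1`. -/
def tanhE (x : ℝ≥0∞) : ℝ := if x = ⊤ then 1 else Real.tanh x.toReal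

variable {E : Type*} [NormedAddCommGroup E] [NormedSpace ℂ E]

/-- Admissible values for the Lempert function of `D` between `z` and `w`. -/
def lemSet (D : Set E) (z w : E) : Set ℝ :=
  {c | ∃ (f : ℂ → E) (ζ : ℂ), DifferentiableOn ℂ f uDisc ∧ MapsTo f uDisc D ∧
    f 0 = z ∧ ζ ∈ uDisc ∧ f ζ = w ∧ c = pDist 0 ζ}

/-- The Kobayashi (pseudo)distance of `D`, defined via chains of analytic discs. -/
def kDist (D : Set E) (z w : E) : ℝ :=
  sInf {s | ∃ (m : ℕ) (p : ℕ → E), p 0 = z ∧ p m = w ∧ (∀ i, i ≤ m → p i ∈ D) ∧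
      s = ∑ i ∈ Finset.range m, sInf (lemSet D (p i) (p (i + 1)))}

/-- Kobayashi ball of center `z` and radius `r` in `D`. -/
def kBall (D : Set E) (z : E) (r : ℝ) : Set E := {w ∈ D | kDist D w z < r}

/-- Bloch radius of `X ⊆ D` with respect to the Kobayashi distance of `D`. -/
def blochRadius (D X : Set E) : ℝ≥0∞ :=
  ⨆ (r : NNReal) (_ : ∃ z ∈ D, kBall D z (r : ℝ) ⊆ X), (r : ℝ≥0∞)

/-- The Kobayashi infinitesimal (pseudo)metric of `D`. -/
def kMetric (D : Set E) (z v : E) : ℝ :=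
  sInf {c | ∃ (f : ℂ → E) (r : ℝ), DifferentiableOn ℂ f uDisc ∧ MapsTo f uDisc D ∧
    f 0 = z ∧ 0 < r ∧ deriv f 0 = r • v ∧ c = 1 / r}

/-- The hyperbolic Lipschitz constant `μ_D(X)` of `X` inside `D`. -/
def lipConst (D X : Set E) : ℝ :=
  sSup {t | ∃ z ∈ X, ∃ v : E, v ≠ 0 ∧ t = kMetric D z v / kMetric X z v}

/-- `comps f j = f j ∘ ⋯ ∘ f 0`, the iterated function system associated to `f`. -/
def comps (f : ℕ → E → E) : ℕ → E → E
  | 0 => f 0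
  | (j + 1) => f (j + 1) ∘ comps f j

/-- `F` is a limit, in the compact-open topology on `D`, of a subsequence of the
iterated function system associated to `f`. -/
def IFSLimit (D : Set E) (f : ℕ → E → E) (F : E → E) : Prop :=
  ∃ s : ℕ → ℕ, StrictMono s ∧
    TendstoLocallyUniformlyOn (fun j => comps f (s j)) F atTop D

/-- `X ⊆ D` is degenerate in `D`: every limit of every iterated function system of
holomorphic self-maps of `D` with image in `X` is constant. -/
def Degenerate (D X : Set E) : Prop :=
  ∀ f : ℕ → E → E, (∀ j, DifferentiableOn ℂ (f j) D ∧ MapsTo (f j) D X) →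
    ∀ F : E → E, IFSLimit D f F → ∃ c, ∀ z ∈ D, F z = c

/-- A complex geodesic of `D`: a holomorphic isometry from the Poincaré distance of
the unit disc to the Kobayashi distance of `D`. -/
def IsComplexGeodesic (D : Set E) (φ : ℂ → E) : Prop :=
  DifferentiableOn ℂ φ uDisc ∧ MapsTo φ uDisc D ∧
    ∀ ζ ∈ uDisc, ∀ η ∈ uDisc, kDist D (φ ζ) (φ η) = pDist ζ η

/-- A Lempert projection associated to the complex geodesic `φ`: a holomorphic
retraction of `D` onto `φ(𝔻)` with affine fibers. -/
def IsLempertProjection (D : Set E) (φ : ℂ → E) (ρ : E → E) : Prop :=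
  DifferentiableOn ℂ ρ D ∧ MapsTo ρ D (φ '' uDisc) ∧
    (∀ z ∈ D, ρ (ρ z) = ρ z) ∧ (∀ ζ ∈ uDisc, ρ (φ ζ) = φ ζ) ∧
    ∀ ζ ∈ uDisc, ∃ (L : E →ₗ[ℂ] ℂ) (c : ℂ), L ≠ 0 ∧
      {w ∈ D | ρ w = φ ζ} = {w ∈ D | L w = c}

/-- A Lempert projection device `(φ, ρ, ρ̃)`: a complex geodesic, an associated
Lempert projection, and the left inverse `ρ̃ = φ⁻¹ ∘ ρ`. -/
def IsLempertDevice (D : Set E) (φ : ℂ → E) (ρ : E → E) (ρt : E → ℂ) : Prop :=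
  IsComplexGeodesic D φ ∧ IsLempertProjection D φ ρ ∧
    ∀ z ∈ D, ρt z ∈ uDisc ∧ φ (ρt z) = ρ z

/-- `X` is 1-Bloch in `D`: there is `C > 0` such that for every Lempert projection
device, `ρ̃(X)` is contained in a Bloch subdomain of the disc of Bloch radius `< C`. -/
def OneBloch (D X : Set E) : Prop :=
  ∃ C > (0 : ℝ), ∀ (φ : ℂ → E) (ρ : E → E) (ρt : E → ℂ),
    IsLempertDevice D φ ρ ρt → ∃ U : Set ℂ, IsOpen U ∧ IsConnected U ∧ U ⊆ uDisc ∧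
      ρt '' X ⊆ U ∧ blochRadiusD U < ENNReal.ofReal C

/-- `X` is c-Bloch in `D`: there is `C > 0` such that for every Lempert projection
device, `ρ̃(X ∩ φ(𝔻))` is contained in a Bloch subdomain of Bloch radius `≤ C`. -/
def CBloch (D X : Set E) : Prop :=
  ∃ C > (0 : ℝ), ∀ (φ : ℂ → E) (ρ : E → E) (ρt : E → ℂ),
    IsLempertDevice D φ ρ ρt → ∃ U : Set ℂ, IsOpen U ∧ IsConnected U ∧ U ⊆ uDisc ∧
      ρt '' (X ∩ φ '' uDisc) ⊆ U ∧ blochRadiusD U ≤ ENNReal.ofReal C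


-- membership of affine disc
lemma kset_nonempty {D : Set ℂ} (hD : IsOpen D) {z : ℂ} (hz : z ∈ D) (v : ℂ) :
    {c | ∃ (f : ℂ → ℂ) (r : ℝ), DifferentiableOn ℂ f uDisc ∧ MapsTo f uDisc D ∧
      f 0 = z ∧ 0 < r ∧ deriv f 0 = r • v ∧ c = 1 / r}.Nonempty := by
  obtain ⟨δ, hδ, hball⟩ := Metric.isOpen_iff.mp hD z hz
  rcases eq_or_ne v 0 with rfl | hv
  · exact ⟨1, fun _ => z, 1, differentiableOn_const z, fun ζ _ => hball (by simp [hδ]),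
      rfl, one_pos, by simp, by norm_num⟩
  · have hv0 : 0 < norm v := norm_pos_iff.mpr hv
    set r : ℝ := δ / (2 * norm v) with hr
    have hr0 : 0 < r := div_pos hδ (by linarith)
    refine ⟨1 / r, fun ζ => z + ζ * ((r : ℂ) * v), r, ?_, ?_, by simp, hr0, ?_, rfl⟩
    · apply DifferentiableOn.const_add
      exact (differentiable_id.mul (differentiable_const _)).differentiableOn
    · intro ζ hζ
      apply hball
      simp only [mem_ball, dist_eq_norm, add_sub_cancel_left]
      have hζ1 : norm ζ < 1 := by simpa [uDisc, Complex.dist_eq] using hζ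
      have : norm (ζ * ((r:ℂ) * v)) = norm ζ * (r * norm v) := by
        simp [map_mul, abs_of_pos hr0, Complex.norm_real]
      rw [this, hr]
      have : δ / (2 * norm v) * norm v = δ / 2 := by field_simp
      rw [this]
      nlinarith [norm_nonneg ζ]
    · have : deriv (fun ζ : ℂ => z + ζ * ((r:ℂ) * v)) 0 = (r:ℂ) * v := by
        rw [deriv_const_add]
        simp [deriv_mul_const]
      rw [this, Complex.real_smul]

lemma mem_uDisc_iff {z : ℂ} : z ∈ uDisc ↔ norm z < 1 := by
  simp [uDisc, Complex.dist_eq]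

-- every admissible c is at least |v|/2, and nonneg
lemma kset_lb {D : Set ℂ} (hD : D ⊆ uDisc) {z v : ℂ} {c : ℝ}
    (hc : c ∈ {c | ∃ (f : ℂ → ℂ) (r : ℝ), DifferentiableOn ℂ f uDisc ∧ MapsTo f uDisc D ∧
      f 0 = z ∧ 0 < r ∧ deriv f 0 = r • v ∧ c = 1 / r}) :
    norm v / 2 ≤ c ∧ 0 ≤ c := by
  obtain ⟨g, r, hgd, hgm, hg0, hr, hg', rfl⟩ := hc
  have h0 : (0:ℂ) ∈ uDisc := by simp [mem_uDisc_iff]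
  have hmaps : MapsTo g (ball 0 1) (ball (g 0) 2) := by
    intro ζ hζ
    have h1 : g ζ ∈ uDisc := hD (hgm hζ)
    have h2 : g 0 ∈ uDisc := hD (hgm h0)
    rw [mem_uDisc_iff] at h1 h2
    rw [mem_ball, Complex.dist_eq]
    calc norm (g ζ - g 0) ≤ norm (g ζ) + norm (g 0) :=
          (norm_sub_le _ _)
      _ < 2 := by linarith
  have := Complex.norm_deriv_le_div_of_mapsTo_ball (c := 0) (R₁ := 1) (R₂ := 2) hgd (hmaps.mono_right ball_subset_closedBall) one_pos
  rw [hg'] at this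
  have hn : ‖r • v‖ = r * norm v := by
    rw [norm_smul, Real.norm_eq_abs, abs_of_pos hr]
  rw [hn] at this
  have h2 : r * norm v ≤ 2 := by linarith [this, (by norm_num : (2:ℝ)/1 = 2)]
  constructor
  · rw [div_le_div_iff₀ (by norm_num) hr, one_mul]
    nlinarith
  · positivity

lemma kMetric_nonneg {D : Set ℂ} (hD : D ⊆ uDisc) (z v : ℂ) : 0 ≤ kMetric D z v :=
  Real.sInf_nonneg (fun c hc => (kset_lb hD hc).2)

lemma kset_bddBelow {D : Set ℂ} (hD : D ⊆ uDisc) (z v : ℂ) :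
    BddBelow {c | ∃ (f : ℂ → ℂ) (r : ℝ), DifferentiableOn ℂ f uDisc ∧ MapsTo f uDisc D ∧
      f 0 = z ∧ 0 < r ∧ deriv f 0 = r • v ∧ c = 1 / r} :=
  ⟨0, fun c hc => (kset_lb hD hc).2⟩

lemma kMetric_lb {D : Set ℂ} (hDo : IsOpen D) (hD : D ⊆ uDisc) {z : ℂ} (hz : z ∈ D) (v : ℂ) :
    norm v / 2 ≤ kMetric D z v :=
  le_csInf (kset_nonempty hDo hz v) (fun c hc => (kset_lb hD hc).1)

-- monotonicity: D₁ ⊆ D₂ (both inside disc) gives kMetric D₂ ≤ kMetric D₁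
lemma kMetric_mono {D₁ D₂ : Set ℂ} (hD₁o : IsOpen D₁) (h12 : D₁ ⊆ D₂) (hD₂ : D₂ ⊆ uDisc)
    {z : ℂ} (hz : z ∈ D₁) (v : ℂ) : kMetric D₂ z v ≤ kMetric D₁ z v := by
  apply csInf_le_csInf (kset_bddBelow hD₂ z v) (kset_nonempty hD₁o hz v)
  rintro c ⟨g, r, h1, h2, h3, h4, h5, h6⟩
  exact ⟨g, r, h1, h2.mono_right h12, h3, h4, h5, h6⟩

lemma isOpen_uDisc : IsOpen uDisc := Metric.isOpen_ball

-- kMetric of uDisc at zero vector is ≤ 0 hence = 0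
lemma kMetric_zero {D : Set ℂ} (hDo : IsOpen D) (hD : D ⊆ uDisc) {z : ℂ} (hz : z ∈ D) :
    kMetric D z 0 = 0 := by
  refine le_antisymm ?_ (kMetric_nonneg hD z 0)
  refine le_of_forall_pos_le_add fun ε hε => ?_
  have : (1 : ℝ) / (2/ε) ∈ {c | ∃ (f : ℂ → ℂ) (r : ℝ), DifferentiableOn ℂ f uDisc ∧
      MapsTo f uDisc D ∧ f 0 = z ∧ 0 < r ∧ deriv f 0 = r • (0:ℂ) ∧ c = 1 / r} :=
    ⟨fun _ => z, 2/ε, differentiableOn_const z, fun _ _ => hz, rfl, by positivity, by simp, rfl⟩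
  calc kMetric D z 0 ≤ 1 / (2/ε) := csInf_le (kset_bddBelow hD z 0) this
    _ ≤ 0 + ε := by rw [one_div_div]; linarith

-- upper bound on disc metric
lemma kMetric_ub {z : ℂ} (hz : z ∈ uDisc) (v : ℂ) :
    kMetric uDisc z v ≤ norm v / (1 - norm z) := by
  rcases eq_or_ne v 0 with rfl | hv
  · rw [kMetric_zero isOpen_uDisc subset_rfl hz]; simp
  · have hz1 : norm z < 1 := mem_uDisc_iff.mp hz
    have hv0 : 0 < norm v := norm_pos_iff.mpr hv
    set r : ℝ := (1 - norm z) / norm v with hrdef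
    have hr0 : 0 < r := div_pos (by linarith) hv0
    have hmem : (1 : ℝ) / r ∈ {c | ∃ (f : ℂ → ℂ) (r : ℝ), DifferentiableOn ℂ f uDisc ∧
        MapsTo f uDisc uDisc ∧ f 0 = z ∧ 0 < r ∧ deriv f 0 = r • v ∧ c = 1 / r} := by
      refine ⟨fun ζ => z + ζ * ((r : ℂ) * v), r, ?_, ?_, by simp, hr0, ?_, rfl⟩
      · apply DifferentiableOn.const_add
        exact (differentiable_id.mul (differentiable_const _)).differentiableOn
      · intro ζ hζ
        rw [mem_uDisc_iff] at hζ ⊢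
        have habs : norm (ζ * ((r:ℂ) * v)) = norm ζ * (r * norm v) := by
          simp [map_mul, abs_of_pos hr0, Complex.norm_real]
        have hrv : r * norm v = 1 - norm z := by
          rw [hrdef]; field_simp
        calc norm (z + ζ * ((r:ℂ)*v)) ≤ norm z + norm (ζ * ((r:ℂ)*v)) :=
              norm_add_le _ _
          _ = norm z + norm ζ * (1 - norm z) := by rw [habs, hrv]
          _ < norm z + 1 * (1 - norm z) := by
              apply add_lt_add_right
              apply mul_lt_mul_of_pos_right hζ (by linarith)
          _ = 1 := by ring
      · have : deriv (fun ζ : ℂ => z + ζ * ((r:ℂ) * v)) 0 = (r:ℂ) * v := by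
          rw [deriv_const_add]; simp [deriv_mul_const]
        rw [this, Complex.real_smul]
    calc kMetric uDisc z v ≤ 1 / r := csInf_le (kset_bddBelow subset_rfl z v) hmem
      _ = norm v / (1 - norm z) := by
          rw [hrdef, one_div_div]

-- Schwarz–Pick: composing with a holomorphic map h : uDisc → X
lemma kMetric_comp {X : Set ℂ} (hXo : IsOpen X) (hX : X ⊆ uDisc) {h : ℂ → ℂ}
    (hhd : DifferentiableOn ℂ h uDisc) (hhm : MapsTo h uDisc X)
    {z : ℂ} (hz : z ∈ uDisc) (w : ℂ) :
    kMetric X (h z) (deriv h z * w) ≤ kMetric uDisc z w := by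
  apply csInf_le_csInf (kset_bddBelow hX (h z) (deriv h z * w)) (kset_nonempty isOpen_uDisc hz w)
  rintro c ⟨g, r, hgd, hgm, hg0, hr, hg', rfl⟩
  refine ⟨h ∘ g, r, hhd.comp hgd hgm, hhm.comp hgm, by simp [hg0], hr, ?_, rfl⟩
  have hga : DifferentiableAt ℂ g 0 :=
    hgd.differentiableAt (isOpen_uDisc.mem_nhds (by simp [mem_uDisc_iff]))
  have hha : DifferentiableAt ℂ h (g 0) :=
    hhd.differentiableAt (isOpen_uDisc.mem_nhds (hgm (by simp [mem_uDisc_iff])))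
  rw [deriv_comp (x := 0) hha hga, hg', hg0]
  rw [Complex.real_smul, Complex.real_smul]
  ring

-- bound from the Lipschitz constant
lemma lip_set_bddAbove {X : Set ℂ} (hXo : IsOpen X) (hX : X ⊆ uDisc) :
    BddAbove {t | ∃ z ∈ X, ∃ v : ℂ, v ≠ 0 ∧ t = kMetric uDisc z v / kMetric X z v} := by
  refine ⟨1, ?_⟩
  rintro t ⟨z, hz, v, hv, rfl⟩
  have hle : kMetric uDisc z v ≤ kMetric X z v := kMetric_mono hXo hX subset_rfl hz v
  have h0 : 0 ≤ kMetric uDisc z v := kMetric_nonneg subset_rfl z v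
  rcases eq_or_lt_of_le (le_trans h0 hle) with hX0 | hX0
  · rw [← hX0]
    simp
  · exact div_le_one_of_le₀ hle hX0.le

lemma kMetric_le_lip {X : Set ℂ} (hXo : IsOpen X) (hX : X ⊆ uDisc)
    {z v : ℂ} (hz : z ∈ X) (hv : v ≠ 0) :
    kMetric uDisc z v ≤ lipConst uDisc X * kMetric X z v := by
  have hmem : kMetric uDisc z v / kMetric X z v ∈
      {t | ∃ z ∈ X, ∃ v : ℂ, v ≠ 0 ∧ t = kMetric uDisc z v / kMetric X z v} :=
    ⟨z, hz, v, hv, rfl⟩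
  have hts : kMetric uDisc z v / kMetric X z v ≤ lipConst uDisc X :=
    le_csSup (lip_set_bddAbove hXo hX) hmem
  have hXpos : 0 < kMetric X z v := by
    have h1 : norm v / 2 ≤ kMetric X z v := kMetric_lb hXo hX hz v
    have : 0 < norm v := norm_pos_iff.mpr hv
    linarith
  calc kMetric uDisc z v = kMetric uDisc z v / kMetric X z v * kMetric X z v := by
        field_simp
    _ ≤ lipConst uDisc X * kMetric X z v := by
        apply mul_le_mul_of_nonneg_right hts hXpos.le

lemma lipConst_nonneg {X : Set ℂ} (hXo : IsOpen X) (hX : X ⊆ uDisc) (hne : X.Nonempty) :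
    0 ≤ lipConst uDisc X := by
  obtain ⟨z, hz⟩ := hne
  have hmem : kMetric uDisc z 1 / kMetric X z 1 ∈
      {t | ∃ z ∈ X, ∃ v : ℂ, v ≠ 0 ∧ t = kMetric uDisc z v / kMetric X z v} :=
    ⟨z, hz, 1, one_ne_zero, rfl⟩
  refine le_trans ?_ (le_csSup (lip_set_bddAbove hXo hX) hmem)
  have h1 : 0 ≤ kMetric uDisc z 1 := kMetric_nonneg subset_rfl z 1
  have h2 : 0 ≤ kMetric X z 1 := kMetric_nonneg hX z 1
  positivity

-- core contraction lemma
lemma core {X : Set ℂ} (hXo : IsOpen X) (hX : X ⊆ uDisc) (hne : X.Nonempty) {h : ℂ → ℂ}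
    (hhd : DifferentiableOn ℂ h uDisc) (hhm : MapsTo h uDisc X)
    {z : ℂ} (hz : z ∈ uDisc) (w : ℂ) :
    kMetric uDisc (h z) (deriv h z * w) ≤ lipConst uDisc X * kMetric uDisc z w := by
  have hmu : 0 ≤ lipConst uDisc X := lipConst_nonneg hXo hX hne
  have hk : 0 ≤ kMetric uDisc z w := kMetric_nonneg subset_rfl z w
  rcases eq_or_ne (deriv h z * w) 0 with h0 | h0
  · rw [h0, kMetric_zero isOpen_uDisc subset_rfl (hX (hhm hz))]
    positivity
  · calc kMetric uDisc (h z) (deriv h z * w)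
        ≤ lipConst uDisc X * kMetric X (h z) (deriv h z * w) :=
          kMetric_le_lip hXo hX (hhm hz) h0
      _ ≤ lipConst uDisc X * kMetric uDisc z w := by
          apply mul_le_mul_of_nonneg_left (kMetric_comp hXo hX hhd hhm hz w) hmu

lemma comps_diff_maps {X : Set ℂ} (hX : X ⊆ uDisc) {f : ℕ → ℂ → ℂ}
    (hf : ∀ j, DifferentiableOn ℂ (f j) uDisc ∧ MapsTo (f j) uDisc X) (j : ℕ) :
    DifferentiableOn ℂ (comps f j) uDisc ∧ MapsTo (comps f j) uDisc X := by
  induction j with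
  | zero => exact hf 0
  | succ j ih =>
    have hm : MapsTo (comps f j) uDisc uDisc := ih.2.mono_right hX
    exact ⟨(hf (j+1)).1.comp ih.1 hm, (hf (j+1)).2.comp hm⟩

lemma comps_contract {X : Set ℂ} (hXo : IsOpen X) (hX : X ⊆ uDisc) (hne : X.Nonempty)
    {f : ℕ → ℂ → ℂ}
    (hf : ∀ j, DifferentiableOn ℂ (f j) uDisc ∧ MapsTo (f j) uDisc X) (j : ℕ)
    {z : ℂ} (hz : z ∈ uDisc) (w : ℂ) :
    kMetric uDisc (comps f j z) (deriv (comps f j) z * w)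
      ≤ lipConst uDisc X ^ (j + 1) * kMetric uDisc z w := by
  induction j with
  | zero =>
    simpa [comps] using core hXo hX hne (hf 0).1 (hf 0).2 hz w
  | succ j ih =>
    have hC := comps_diff_maps hX hf j
    have hzin : comps f j z ∈ uDisc := hX (hC.2 hz)
    have hderiv : deriv (comps f (j+1)) z = deriv (f (j+1)) (comps f j z) * deriv (comps f j) z := by
      show deriv (f (j+1) ∘ comps f j) z = _
      rw [deriv_comp (x := z) ((hf (j+1)).1.differentiableAt (isOpen_uDisc.mem_nhds hzin))
        (hC.1.differentiableAt (isOpen_uDisc.mem_nhds hz))]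
    have hmu : 0 ≤ lipConst uDisc X := lipConst_nonneg hXo hX hne
    calc kMetric uDisc (comps f (j+1) z) (deriv (comps f (j+1)) z * w)
        = kMetric uDisc (f (j+1) (comps f j z))
            (deriv (f (j+1)) (comps f j z) * (deriv (comps f j) z * w)) := by
          rw [hderiv, mul_assoc]; rfl
      _ ≤ lipConst uDisc X * kMetric uDisc (comps f j z) (deriv (comps f j) z * w) :=
          core hXo hX hne (hf (j+1)).1 (hf (j+1)).2 hzin _
      _ ≤ lipConst uDisc X * (lipConst uDisc X ^ (j+1) * kMetric uDisc z w) :=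
          mul_le_mul_of_nonneg_left ih hmu
      _ = lipConst uDisc X ^ (j+1+1) * kMetric uDisc z w := by ring

lemma comps_deriv_bound {X : Set ℂ} (hXo : IsOpen X) (hX : X ⊆ uDisc) (hne : X.Nonempty)
    {f : ℕ → ℂ → ℂ}
    (hf : ∀ j, DifferentiableOn ℂ (f j) uDisc ∧ MapsTo (f j) uDisc X) (j : ℕ)
    {z : ℂ} (hz : z ∈ uDisc) :
    norm (deriv (comps f j) z)
      ≤ 2 * (lipConst uDisc X ^ (j + 1) / (1 - norm z)) := by
  have hC := comps_diff_maps hX hf j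
  have hzin : comps f j z ∈ uDisc := hX (hC.2 hz)
  have h1 : norm (deriv (comps f j) z * 1) / 2
      ≤ kMetric uDisc (comps f j z) (deriv (comps f j) z * 1) :=
    kMetric_lb isOpen_uDisc subset_rfl hzin _
  have h2 := comps_contract hXo hX hne hf j hz 1
  have h3 : kMetric uDisc z 1 ≤ ‖(1:ℂ)‖ / (1 - norm z) := kMetric_ub hz 1
  have hmu : 0 ≤ lipConst uDisc X ^ (j + 1) :=
    pow_nonneg (lipConst_nonneg hXo hX hne) _
  have hz1 : norm z < 1 := mem_uDisc_iff.mp hz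
  have h4 : kMetric uDisc (comps f j z) (deriv (comps f j) z * 1)
      ≤ lipConst uDisc X ^ (j + 1) * (1 / (1 - norm z)) := by
    refine h2.trans ?_
    apply mul_le_mul_of_nonneg_left _ hmu
    simpa using h3
  have := h1.trans h4
  rw [mul_one] at this
  rw [div_le_iff₀ (by norm_num : (0:ℝ) < 2)] at this
  calc norm (deriv (comps f j) z)
      ≤ lipConst uDisc X ^ (j+1) * (1 / (1 - norm z)) * 2 := this
    _ = 2 * (lipConst uDisc X ^ (j + 1) / (1 - norm z)) := by ring


set_option maxHeartbeats 1000000 in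
/-- a Lipschitz subdomain of the unit disc is degenerate. -/
theorem stmt3 (U : Set ℂ) (hUo : IsOpen U) (hUc : IsConnected U) (hUD : U ⊆ uDisc)
    (hLip : lipConst uDisc U < 1) :
    Degenerate uDisc U := by
  intro f hf F hlim
  obtain ⟨s, hs, htlu⟩ := hlim
  have h0D : (0 : ℂ) ∈ uDisc := by simp [mem_uDisc_iff]
  have hne : U.Nonempty := ⟨f 0 0, (hf 0).2 h0D⟩
  set μ := lipConst uDisc U with hμ
  have hmu0 : 0 ≤ μ := lipConst_nonneg hUo hUD hne
  have hdiffs : ∀ j : ℕ, DifferentiableOn ℂ (comps f (s j)) uDisc :=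
    fun j => (comps_diff_maps hUD hf (s j)).1
  have hFd : DifferentiableOn ℂ F uDisc :=
    htlu.differentiableOn (Eventually.of_forall hdiffs) isOpen_uDisc
  have hderiv := htlu.deriv (Eventually.of_forall hdiffs) isOpen_uDisc
  have hzero : ∀ z ∈ uDisc, deriv F z = 0 := by
    intro z hz
    have hz1 : norm z < 1 := mem_uDisc_iff.mp hz
    have h1 : Filter.Tendsto (fun j => deriv (comps f (s j)) z) atTop (nhds (deriv F z)) :=
      hderiv.tendsto_at hz
    have h2 : Filter.Tendsto (fun j => deriv (comps f (s j)) z) atTop (nhds 0) := by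
      apply squeeze_zero_norm (a := fun j => 2 / (1 - norm z) * μ ^ (s j + 1))
      · intro j
        have := comps_deriv_bound hUo hUD hne hf (s j) hz
        calc ‖deriv (comps f (s j)) z‖ = norm (deriv (comps f (s j)) z) :=
              rfl
          _ ≤ 2 * (μ ^ (s j + 1) / (1 - norm z)) := this
          _ = 2 / (1 - norm z) * μ ^ (s j + 1) := by ring
      · have hp : Filter.Tendsto (fun n : ℕ => μ ^ n) atTop (nhds 0) :=
          tendsto_pow_atTop_nhds_zero_of_lt_one hmu0 hLip
        have hsa : Filter.Tendsto (fun j => s j + 1) atTop atTop :=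
          (Filter.tendsto_add_atTop_nat 1).comp hs.tendsto_atTop
        have := (hp.comp hsa).const_mul (2 / (1 - norm z))
        simpa using this
    exact tendsto_nhds_unique h1 h2
  refine ⟨F 0, fun z hz => ?_⟩
  have hconv : Convex ℝ uDisc := convex_ball 0 1
  apply hconv.is_const_of_fderivWithin_eq_zero hFd _ hz h0D
  intro x hx
  rw [fderivWithin_of_mem_nhds (isOpen_uDisc.mem_nhds hx)]
  ext
  show deriv F x = _
  rw [hzero x hx]
  rfl
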